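/- Every matrix A ∈ M_d(ℂ) with trace zero is unitarily similar to a matrix with all diagonal entries equal to zero; that is, there exists a unitary U such that U⁻¹AU has zero diagonal. -/

import Mathlib

open Matrix

lemma quad_expand {n : ℕ} (M : Matrix (Fin n) (Fin n) ℂ) (x y : Fin n → ℂ) (r s : ℂ) :
    star (r • x + s • y) ⬝ᵥ M *ᵥ (r • x + s • y) =
      (starRingEnd ℂ r) * r * (star x ⬝ᵥ M *ᵥ x) + (starRingEnd ℂ r) * s * (star x ⬝ᵥ M *ᵥ y)
      + (starRingEnd ℂ s) * r * (star y ⬝ᵥ M *ᵥ x) + (starRingEnd ℂ s) * s * (star y ⬝ᵥ M *ᵥ y) := by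
  simp only [dotProduct, Matrix.mulVec, Pi.add_apply, Pi.smul_apply, Pi.star_apply, smul_eq_mul,
    star_add, star_mul', Finset.mul_sum, Finset.sum_add_distrib, mul_add, add_mul, starRingEnd_apply]
  simp only [← Finset.sum_add_distrib]
  apply Finset.sum_congr rfl
  intro i _
  apply Finset.sum_congr rfl
  intro j _
  ring

lemma quad_vsmul {n : ℕ} (M : Matrix (Fin n) (Fin n) ℂ) (y : Fin n → ℂ) (k : ℂ) :
    star (k • y) ⬝ᵥ M *ᵥ (k • y) = (starRingEnd ℂ k) * k * (star y ⬝ᵥ M *ᵥ y) := by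
  have h := quad_expand M y y k 0
  simpa using h

lemma quad_smul {n : ℕ} (M : Matrix (Fin n) (Fin n) ℂ) (x : Fin n → ℂ) (c : ℂ) :
    star x ⬝ᵥ (c • M) *ᵥ x = c * (star x ⬝ᵥ M *ᵥ x) := by
  rw [Matrix.smul_mulVec, dotProduct_smul, smul_eq_mul]

lemma quad_sub_smul_one {n : ℕ} (M : Matrix (Fin n) (Fin n) ℂ) (x : Fin n → ℂ)
    (hx : star x ⬝ᵥ x = 1) (c : ℂ) :
    star x ⬝ᵥ (M - c • 1) *ᵥ x = star x ⬝ᵥ M *ᵥ x - c := by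
  rw [Matrix.sub_mulVec, dotProduct_sub, Matrix.smul_mulVec, Matrix.one_mulVec,
    dotProduct_smul, smul_eq_mul, hx, mul_one]

lemma norm_expand {n : ℕ} (x y : Fin n → ℂ) (r s : ℂ) :
    star (r • x + s • y) ⬝ᵥ (r • x + s • y) =
      (starRingEnd ℂ r) * r * (star x ⬝ᵥ x) + (starRingEnd ℂ r) * s * (star x ⬝ᵥ y)
      + (starRingEnd ℂ s) * r * (star y ⬝ᵥ x) + (starRingEnd ℂ s) * s * (star y ⬝ᵥ y) := by
  have h := quad_expand (1 : Matrix (Fin n) (Fin n) ℂ) x y r s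
  simpa [Matrix.one_mulVec] using h

lemma norm_vsmul {n : ℕ} (y : Fin n → ℂ) (k : ℂ) :
    star (k • y) ⬝ᵥ (k • y) = (starRingEnd ℂ k) * k * (star y ⬝ᵥ y) := by
  have h := quad_vsmul (1 : Matrix (Fin n) (Fin n) ℂ) y k
  simpa [Matrix.one_mulVec] using h

/-- star v ⬝ᵥ v is a nonneg real -/
lemma dot_star_self_real {n : ℕ} (v : Fin n → ℂ) :
    star v ⬝ᵥ v = ((∑ i, Complex.normSq (v i) : ℝ) : ℂ) := by
  simp only [dotProduct, Pi.star_apply]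
  push_cast
  apply Finset.sum_congr rfl
  intro i _
  rw [Complex.star_def, mul_comm, Complex.mul_conj]

lemma dot_smul_right {n : ℕ} (M : Matrix (Fin n) (Fin n) ℂ) (v y : Fin n → ℂ) (k : ℂ) :
    star v ⬝ᵥ M *ᵥ (k • y) = k * (star v ⬝ᵥ M *ᵥ y) := by
  rw [Matrix.mulVec_smul, dotProduct_smul, smul_eq_mul]

lemma dot_smul_left {n : ℕ} (M : Matrix (Fin n) (Fin n) ℂ) (v y : Fin n → ℂ) (k : ℂ) :
    star (k • y) ⬝ᵥ M *ᵥ v = (starRingEnd ℂ k) * (star y ⬝ᵥ M *ᵥ v) := by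
  simp only [dotProduct, Pi.star_apply, Pi.smul_apply, smul_eq_mul, star_mul', Finset.mul_sum,
    starRingEnd_apply]
  apply Finset.sum_congr rfl
  intro i _
  ring
lemma exists_unit_quad_zero_of_signs {n : ℕ} (M : Matrix (Fin n) (Fin n) ℂ) (x y : Fin n → ℂ)
    (hx : star x ⬝ᵥ x = 1) (hy : star y ⬝ᵥ y = 1) {a b : ℝ} (ha : 0 ≤ a) (hb : b ≤ 0)
    (hqx : star x ⬝ᵥ M *ᵥ x = (a : ℂ)) (hqy : star y ⬝ᵥ M *ᵥ y = (b : ℂ)) :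
    ∃ z : Fin n → ℂ, star z ⬝ᵥ z = 1 ∧ star z ⬝ᵥ M *ᵥ z = 0 := by
  rcases eq_or_lt_of_le ha with h0 | ha'
  · exact ⟨x, hx, by rw [hqx, ← h0]; norm_num⟩
  rcases eq_or_lt_of_le hb with h0 | hb'
  · exact ⟨y, hy, by rw [hqy, h0]; norm_num⟩
  set p := star x ⬝ᵥ M *ᵥ y with hp
  set q := star y ⬝ᵥ M *ᵥ x with hq
  set w := p - starRingEnd ℂ q with hw
  obtain ⟨u, hu1, hu2⟩ : ∃ u : ℂ, u * starRingEnd ℂ u = 1 ∧ u ^ 2 * w = starRingEnd ℂ w := by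
    by_cases hw0 : w = 0
    · exact ⟨1, by norm_num, by simp [hw0]⟩
    · refine ⟨Complex.exp (Complex.log (starRingEnd ℂ w / w) / 2), ?_, ?_⟩
      · rw [Complex.mul_conj]
        norm_cast
        rw [Complex.normSq_eq_norm_sq, Complex.norm_exp]
        have : (Complex.log (starRingEnd ℂ w / w) / 2).re = 0 := by
          have habs : ‖starRingEnd ℂ w / w‖ = 1 := by
            rw [norm_div, Complex.norm_conj, div_self (by simpa using hw0)]
          rw [Complex.div_re]
          simp [Complex.log_re, habs]
        rw [this]
        norm_num
      · rw [← Complex.exp_nat_mul]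
        have : (2 : ℂ) * (Complex.log (starRingEnd ℂ w / w) / 2) = Complex.log (starRingEnd ℂ w / w) := by
          ring
        rw [show ((2:ℕ):ℂ) = (2:ℂ) by norm_num, this, Complex.exp_log (by
          apply div_ne_zero _ hw0
          simpa using hw0)]
        field_simp
  set cr := (u * p + starRingEnd ℂ u * q) with hcr
  have hcross : cr = ((cr.re : ℝ) : ℂ) := by
    have huw : starRingEnd ℂ u * starRingEnd ℂ w = u * w := by
      calc starRingEnd ℂ u * starRingEnd ℂ w = starRingEnd ℂ u * (u ^ 2 * w) := by rw [hu2]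
        _ = (u * starRingEnd ℂ u) * (u * w) := by ring
        _ = u * w := by rw [hu1, one_mul]
    have : starRingEnd ℂ cr = cr := by
      simp only [hcr, map_add, _root_.map_mul, RingHomCompTriple.comp_apply, RingHom.id_apply,
        Complex.conj_conj]
      have hww : starRingEnd ℂ w = starRingEnd ℂ p - q := by
        rw [hw]; simp
      have hw' : w = p - starRingEnd ℂ q := hw
      -- from huw : conj u * (conj p - q) = u * (p - conj q)
      rw [hww, hw'] at huw
      have := huw
      ring_nf at this ⊢
      linear_combination this
    exact (Complex.conj_eq_iff_re.mp this).symm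
  set c := cr.re with hc
  have hu1' : starRingEnd ℂ u * u = 1 := by rw [mul_comm]; exact hu1
  set y' : Fin n → ℂ := u • y with hy'def
  have hy'norm : star y' ⬝ᵥ y' = 1 := by
    rw [hy'def, norm_vsmul, hy, mul_one, hu1']
  have hqy' : star y' ⬝ᵥ M *ᵥ y' = (b : ℂ) := by
    rw [hy'def, quad_vsmul, hqy, hu1', one_mul]
  set z : ℝ → (Fin n → ℂ) := fun t => ((1 - t : ℝ) : ℂ) • x + ((t : ℝ) : ℂ) • y' with hzdef
  set f : ℝ → ℝ := fun t => (1 - t) ^ 2 * a + t * (1 - t) * c + t ^ 2 * b with hfdef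
  have hfz : ∀ t : ℝ, star (z t) ⬝ᵥ M *ᵥ (z t) = ((f t : ℝ) : ℂ) := by
    intro t
    rw [hzdef]
    rw [quad_expand]
    have h1 : star x ⬝ᵥ M *ᵥ y' = u * p := by rw [hy'def, dot_smul_right]
    have h2 : star y' ⬝ᵥ M *ᵥ x = starRingEnd ℂ u * q := by rw [hy'def, dot_smul_left]
    rw [hqx, hqy', h1, h2]
    simp only [Complex.conj_ofReal]
    have hcrc : u * p + starRingEnd ℂ u * q = ((c:ℝ):ℂ) := hcross
    rw [hfdef]
    push_cast
    linear_combination ((t:ℂ) * (1 - (t:ℂ))) * hcrc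
  obtain ⟨t, ht01, hft⟩ : ∃ t ∈ Set.Icc (0:ℝ) 1, f t = 0 := by
    have hcont : Continuous f := by rw [hfdef]; fun_prop
    have hsub := intermediate_value_Icc' (by norm_num : (0:ℝ) ≤ 1) hcont.continuousOn
    have hf1 : f 1 = b := by rw [hfdef]; norm_num
    have hf0 : f 0 = a := by rw [hfdef]; norm_num
    have h0mem : (0:ℝ) ∈ Set.Icc (f 1) (f 0) := by
      rw [hf0, hf1]
      constructor <;> linarith
    obtain ⟨t, ht, hft⟩ := hsub h0mem
    exact ⟨t, ht, hft⟩
  by_cases hz0 : z t = 0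
  · exfalso
    by_cases ht0 : t = 0
    · rw [ht0] at hz0
      have : x = 0 := by
        have := hz0
        rw [hzdef] at this
        simpa using this
      rw [this] at hx
      simp at hx
    by_cases ht1 : t = 1
    · rw [ht1] at hz0
      have h : y' = 0 := by
        have h := hz0
        rw [hzdef] at h
        norm_num at h
        exact h
      rw [h] at hy'norm
      simp at hy'norm
    -- x = k • y'
    have h1t : ((1 - t : ℝ) : ℂ) ≠ 0 := by
      simp only [ne_eq, Complex.ofReal_eq_zero]
      intro h; apply ht1; linarith
    have hxk : x = (-(t:ℂ) / ((1-t:ℝ):ℂ)) • y' := by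
      rw [hzdef] at hz0
      simp only at hz0
      have : ((1 - t : ℝ) : ℂ) • x = -(((t:ℝ):ℂ) • y') := by
        rw [← eq_neg_of_add_eq_zero_left hz0]
      have h2 : x = (((1 - t : ℝ) : ℂ))⁻¹ • -(((t:ℝ):ℂ) • y') := by
        rw [← this, inv_smul_smul₀ h1t]
      rw [h2, smul_neg, smul_smul, ← neg_smul]
      congr 1
      field_simp
    set k : ℂ := -(t:ℂ) / ((1-t:ℝ):ℂ) with hk
    have hxnorm : starRingEnd ℂ k * k = 1 := by
      rw [hxk, norm_vsmul, hy'norm, mul_one] at hx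
      exact hx
    have hab : (a : ℂ) = (b : ℂ) := by
      rw [hxk, quad_vsmul, hqy', hxnorm, one_mul] at hqx
      exact hqx.symm
    have : a = b := by exact_mod_cast hab
    linarith
  · -- normalize z t
    set r : ℝ := ∑ i, Complex.normSq (z t i) with hr
    have hzr : star (z t) ⬝ᵥ (z t) = ((r:ℝ):ℂ) := dot_star_self_real (z t)
    have hrpos : 0 < r := by
      rcases lt_or_eq_of_le (Finset.sum_nonneg (fun i _ => Complex.normSq_nonneg (z t i))) with h | h
      · exact h
      · exfalso
        apply hz0
        funext i
        have hall : ∀ j ∈ Finset.univ, Complex.normSq (z t j) = 0 :=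
          (Finset.sum_eq_zero_iff_of_nonneg (fun j _ => Complex.normSq_nonneg (z t j))).mp h.symm
        exact Complex.normSq_eq_zero.mp (hall i (Finset.mem_univ i))
    set s : ℂ := (((Real.sqrt r)⁻¹ : ℝ) : ℂ) with hs
    refine ⟨s • z t, ?_, ?_⟩
    · rw [norm_vsmul, hzr, hs, Complex.conj_ofReal]
      norm_cast
      rw [show (Real.sqrt r)⁻¹ * (Real.sqrt r)⁻¹ * r = r / (Real.sqrt r ^ 2) by ring,
        Real.sq_sqrt hrpos.le, div_self hrpos.ne']
    · rw [quad_vsmul, hfz, hft]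
      norm_num
lemma exists_unit_quad_zero {n : ℕ} (A : Matrix (Fin (n+1)) (Fin (n+1)) ℂ)
    (hA : Matrix.trace A = 0) :
    ∃ x : Fin (n+1) → ℂ, star x ⬝ᵥ x = 1 ∧ star x ⬝ᵥ A *ᵥ x = 0 := by
  set W : Set ℂ := {zc : ℂ | ∃ x : Fin (n+1) → ℂ, star x ⬝ᵥ x = 1 ∧ star x ⬝ᵥ A *ᵥ x = zc}
    with hW
  have hconv : Convex ℝ W := by
    intro z1 hz1 z2 hz2 sR tR hs ht hst
    obtain ⟨x, hx, hqx⟩ := hz1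
    obtain ⟨y, hy, hqy⟩ := hz2
    have hsmul : sR • z1 + tR • z2 = (sR:ℂ) * z1 + (tR:ℂ) * z2 := by
      simp [Complex.real_smul]
    by_cases hδ : z1 = z2
    · refine ⟨x, hx, ?_⟩
      rw [hqx, hδ, ← add_smul, hst, one_smul]
    · set δ : ℂ := z1 - z2 with hδdef
      have hδ0 : δ ≠ 0 := sub_ne_zero_of_ne hδ
      set cc : ℂ := (sR:ℂ) * z1 + (tR:ℂ) * z2 with hcc
      set γ : ℂ := starRingEnd ℂ δ with hγ
      have hγ0 : γ ≠ 0 := by simpa [hγ] using hδ0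
      set M : Matrix (Fin (n+1)) (Fin (n+1)) ℂ := γ • (A - cc • 1) with hM
      have hγδ : γ * δ = ((Complex.normSq δ : ℝ) : ℂ) := by
        rw [hγ, mul_comm, Complex.mul_conj]
      have hst' : (sR:ℂ) + (tR:ℂ) = 1 := by exact_mod_cast hst
      have hqMx : star x ⬝ᵥ M *ᵥ x = ((tR * Complex.normSq δ : ℝ) : ℂ) := by
        rw [hM, quad_smul, quad_sub_smul_one A x hx, hqx]
        have : z1 - cc = (tR:ℂ) * δ := by
          rw [hcc, hδdef]
          linear_combination (-z1) * hst'
        rw [this]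
        push_cast
        linear_combination (tR:ℂ) * hγδ
      have hqMy : star y ⬝ᵥ M *ᵥ y = ((-(sR * Complex.normSq δ) : ℝ) : ℂ) := by
        rw [hM, quad_smul, quad_sub_smul_one A y hy, hqy]
        have : z2 - cc = -(sR:ℂ) * δ := by
          rw [hcc, hδdef]
          linear_combination (-z2) * hst'
        rw [this]
        push_cast
        linear_combination (-(sR:ℂ)) * hγδ
      obtain ⟨z, hz, hqz⟩ := exists_unit_quad_zero_of_signs M x y hx hy
        (mul_nonneg ht (Complex.normSq_nonneg δ))
        (neg_nonpos.mpr (mul_nonneg hs (Complex.normSq_nonneg δ))) hqMx hqMy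
      refine ⟨z, hz, ?_⟩
      rw [hM, quad_smul, quad_sub_smul_one A z hz] at hqz
      have := mul_eq_zero.mp hqz
      rcases this with h | h
      · exact absurd h hγ0
      · rw [hsmul]
        exact sub_eq_zero.mp h
  -- each diagonal entry is in W
  have hdiag : ∀ i, A i i ∈ W := by
    intro i
    have hstar : star (Pi.single i 1 : Fin (n+1) → ℂ) = Pi.single i 1 := by
      ext j
      by_cases h : j = i <;> simp [Pi.single_apply, h]
    refine ⟨Pi.single i 1, ?_, ?_⟩
    · rw [hstar, single_dotProduct]
      simp
    · rw [hstar, single_dotProduct, one_mul]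
      simp [Matrix.mulVec_single]
  have h0 : (0 : ℂ) ∈ W := by
    have hsum := hconv.sum_mem (t := (Finset.univ : Finset (Fin (n+1))))
      (w := fun _ => (1 : ℝ) / (n+1)) (z := fun i => A i i)
      (by intro i _; positivity)
      (by
        rw [Finset.sum_const, Finset.card_univ, Fintype.card_fin, nsmul_eq_mul]
        push_cast
        field_simp)
      (fun i _ => hdiag i)
    have : ∑ i : Fin (n+1), ((1:ℝ)/(n+1)) • A i i = 0 := by
      rw [← Finset.smul_sum]
      have : ∑ i : Fin (n+1), A i i = 0 := by
        rw [← hA]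
        rfl
      rw [this, smul_zero]
    rwa [this] at hsum
  exact h0
lemma diag_entry_quad {n : ℕ} (A U : Matrix (Fin n) (Fin n) ℂ) (i : Fin n) :
    (star U * A * U) i i = star (fun k => U k i) ⬝ᵥ A *ᵥ (fun k => U k i) := by
  simp only [Matrix.mul_apply, Matrix.star_apply, dotProduct, Matrix.mulVec, Pi.star_apply,
    Finset.sum_mul, Finset.mul_sum]
  rw [Finset.sum_comm]
  apply Finset.sum_congr rfl
  intro k _
  apply Finset.sum_congr rfl
  intro l _
  ring

lemma quad_single {n : ℕ} (A : Matrix (Fin n) (Fin n) ℂ) (i : Fin n) :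
    star (Pi.single i 1 : Fin n → ℂ) ⬝ᵥ A *ᵥ (Pi.single i 1) = A i i := by
  have hstar : star (Pi.single i 1 : Fin n → ℂ) = Pi.single i 1 := by
    ext j
    by_cases h : j = i <;> simp [Pi.single_apply, h]
  rw [hstar, single_dotProduct, one_mul]
  simp [Matrix.mulVec_single]

lemma householder_unitary {n : ℕ} (w : Fin n → ℂ) (hw : star w ⬝ᵥ w ≠ 0) :
    (1 - (2 / (star w ⬝ᵥ w)) • Matrix.vecMulVec w (star w)) ∈ Matrix.unitaryGroup (Fin n) ℂ ∧
    star (1 - (2 / (star w ⬝ᵥ w)) • Matrix.vecMulVec w (star w))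
      = 1 - (2 / (star w ⬝ᵥ w)) • Matrix.vecMulVec w (star w) := by
  set d : ℂ := star w ⬝ᵥ w with hd
  set c : ℂ := 2 / d with hc
  set O : Matrix (Fin n) (Fin n) ℂ := Matrix.vecMulVec w (star w) with hO
  have hdconj : starRingEnd ℂ d = d := by
    rw [hd, dot_star_self_real]
    exact Complex.conj_ofReal _
  have hcconj : starRingEnd ℂ c = c := by
    rw [hc, map_div₀, hdconj, Complex.conj_ofNat]
  have hOstar : star O = O := by
    ext i j
    simp only [Matrix.star_apply, hO, Matrix.vecMulVec_apply, Pi.star_apply]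
    rw [star_mul']
    simp [mul_comm]
  have hHstar : star (1 - c • O) = 1 - c • O := by
    rw [star_sub, star_one, star_smul, hOstar, show star c = c from hcconj]
  have hOO : O * O = d • O := by
    ext i j
    simp only [Matrix.mul_apply, hO, Matrix.vecMulVec_apply, Matrix.smul_apply, smul_eq_mul,
      hd, dotProduct, Pi.star_apply, Finset.sum_mul, Finset.mul_sum]
    apply Finset.sum_congr rfl
    intro k _
    ring
  have hccd : c * c * d = c + c := by
    rw [hc]
    field_simp
    ring
  have hmul : (1 - c • O) * (1 - c • O) = 1 := by
    rw [sub_mul, one_mul, mul_sub, mul_one, Matrix.smul_mul, Matrix.mul_smul, smul_smul, hOO,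
      smul_smul, hccd, add_smul]
    abel
  constructor
  · rw [Matrix.mem_unitaryGroup_iff']
    rw [hHstar, hmul]
  · exact hHstar
lemma exists_unitary_zero00 {n : ℕ} (A : Matrix (Fin (n+1)) (Fin (n+1)) ℂ)
    (hA : A.trace = 0) :
    ∃ U ∈ Matrix.unitaryGroup (Fin (n+1)) ℂ, (star U * A * U) 0 0 = 0 := by
  obtain ⟨x, hx, hqx⟩ := exists_unit_quad_zero A hA
  set t : ℂ := x 0 with ht
  set u : ℂ := if t = 0 then 1 else (starRingEnd ℂ t) / ‖t‖ with hu
  have habs0 : t ≠ 0 → (‖t‖ : ℝ) ≠ 0 := fun h => by simpa using h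
  have huu : starRingEnd ℂ u * u = 1 := by
    by_cases h : t = 0
    · simp [hu, h]
    · rw [hu, if_neg h, map_div₀, Complex.conj_conj, Complex.conj_ofReal, div_mul_div_comm,
        Complex.mul_conj, ← Complex.ofReal_mul, ← sq, Complex.sq_norm]
      rw [div_self]
      simpa using h
  set x' : Fin (n+1) → ℂ := u • x with hx'def
  have hx'n : star x' ⬝ᵥ x' = 1 := by rw [hx'def, norm_vsmul, hx, mul_one, huu]
  have hqx' : star x' ⬝ᵥ A *ᵥ x' = 0 := by rw [hx'def, quad_vsmul, hqx, mul_zero]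
  have hx'0 : x' 0 = ((‖t‖ : ℝ) : ℂ) := by
    by_cases h : t = 0
    · have : x' 0 = u * t := rfl
      rw [this, h]
      simp
    · have h1 : x' 0 = u * t := rfl
      rw [h1, hu, if_neg h, div_mul_eq_mul_div, mul_comm, Complex.mul_conj]
      rw [show (Complex.normSq t : ℂ) = ((‖t‖ * ‖t‖ : ℝ) : ℂ) by
        rw [← sq, Complex.sq_norm]]
      push_cast
      field_simp
  by_cases habs1 : ‖t‖ = 1
  · have hx'eq : x' = Pi.single 0 1 := by
      have hsum := dot_star_self_real x'
      rw [hx'n] at hsum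
      have hsumr : (∑ i, Complex.normSq (x' i)) = 1 := by exact_mod_cast hsum.symm
      rw [Fin.sum_univ_succ] at hsumr
      have h0 : Complex.normSq (x' 0) = 1 := by
        rw [hx'0, habs1]
        simp
      have hrest : ∑ i : Fin n, Complex.normSq (x' i.succ) = 0 := by linarith
      funext i
      refine Fin.cases ?_ ?_ i
      · rw [hx'0, habs1]
        simp
      · intro j
        have hz := (Finset.sum_eq_zero_iff_of_nonneg
          (fun j _ => Complex.normSq_nonneg (x' j.succ))).mp hrest j (Finset.mem_univ j)
        rw [Pi.single_apply, if_neg (Fin.succ_ne_zero j)]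
        exact Complex.normSq_eq_zero.mp hz
    refine ⟨1, one_mem _, ?_⟩
    simp only [star_one, mul_one, one_mul]
    rw [← quad_single A 0, show (Pi.single (0 : Fin (n+1)) (1:ℂ)) = x' from hx'eq.symm]
    exact hqx'
  · set e0 : Fin (n+1) → ℂ := Pi.single 0 1 with he0
    have hstare : star e0 = e0 := by
      ext j
      by_cases h : j = 0 <;> simp [he0, Pi.single_apply, h]
    set w : Fin (n+1) → ℂ := x' - e0 with hwdef
    have hw0' : w 0 = ((‖t‖ - 1 : ℝ) : ℂ) := by
      have : w 0 = x' 0 - e0 0 := rfl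
      rw [this, hx'0, he0]
      push_cast
      simp
    have hww : star w ⬝ᵥ w = ((2 - 2 * ‖t‖ : ℝ) : ℂ) := by
      rw [hwdef, star_sub, sub_dotProduct, dotProduct_sub, dotProduct_sub, hx'n, hstare]
      rw [show star x' ⬝ᵥ e0 = starRingEnd ℂ (x' 0) from by
        rw [he0, dotProduct_single, mul_one]; rfl]
      rw [show e0 ⬝ᵥ x' = x' 0 from by rw [he0, single_dotProduct, one_mul]]
      rw [show e0 ⬝ᵥ e0 = 1 from by rw [he0, single_dotProduct, one_mul]; simp]
      rw [hx'0, Complex.conj_ofReal]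
      push_cast
      ring
    have hwne : star w ⬝ᵥ w ≠ 0 := by
      rw [hww]
      simp only [ne_eq, Complex.ofReal_eq_zero]
      intro h
      apply habs1
      linarith
    obtain ⟨hHmem, hHstar⟩ := householder_unitary w hwne
    set H : Matrix (Fin (n+1)) (Fin (n+1)) ℂ :=
      1 - (2 / (star w ⬝ᵥ w)) • Matrix.vecMulVec w (star w) with hHdef
    have habsne1 : (2 : ℂ) - 2 * (‖t‖ : ℝ) ≠ 0 := by
      intro h
      apply habs1
      have : ((2 - 2 * ‖t‖ : ℝ) : ℂ) = 0 := by push_cast; linear_combination h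
      have h2 : (2 - 2 * ‖t‖ : ℝ) = 0 := by exact_mod_cast this
      linarith
    have hcw : (2 / (star w ⬝ᵥ w)) * (star w 0) = -1 := by
      rw [show star w 0 = starRingEnd ℂ (w 0) from rfl, hw0', Complex.conj_ofReal, hww]
      push_cast
      rw [div_mul_eq_mul_div]
      rw [div_eq_iff (by push_cast at habsne1 ⊢; exact habsne1)]
      ring
    have hcol : (fun k => H k 0) = x' := by
      funext k
      have h1 : H k 0 = (1 : Matrix (Fin (n+1)) (Fin (n+1)) ℂ) k 0
          - (2 / (star w ⬝ᵥ w)) * (w k * star w 0) := by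
        rw [hHdef]
        simp [Matrix.sub_apply, Matrix.smul_apply, Matrix.vecMulVec_apply, smul_eq_mul]
      rw [h1, show (2 / (star w ⬝ᵥ w)) * (w k * star w 0)
          = ((2 / (star w ⬝ᵥ w)) * star w 0) * w k from by ring, hcw]
      have hwk : w k = x' k - e0 k := rfl
      rw [hwk]
      by_cases h : k = 0
      · subst h
        simp [Matrix.one_apply, he0]
      · simp [Matrix.one_apply_ne h, he0, Pi.single_apply, h]
    refine ⟨H, hHmem, ?_⟩
    rw [diag_entry_quad A H 0, hcol]
    exact hqx'
def oplusOne {n : ℕ} (V : Matrix (Fin n) (Fin n) ℂ) : Matrix (Fin (n+1)) (Fin (n+1)) ℂ :=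
  Matrix.of fun i j =>
    Fin.cases (Fin.cases (1:ℂ) (fun _ => 0) j) (fun i' => Fin.cases 0 (fun j' => V i' j') j) i

@[simp] lemma oplusOne_00 {n : ℕ} (V : Matrix (Fin n) (Fin n) ℂ) : oplusOne V 0 0 = 1 := by
  simp [oplusOne]

@[simp] lemma oplusOne_0succ {n : ℕ} (V : Matrix (Fin n) (Fin n) ℂ) (j : Fin n) :
    oplusOne V 0 j.succ = 0 := by
  simp [oplusOne]

@[simp] lemma oplusOne_succ0 {n : ℕ} (V : Matrix (Fin n) (Fin n) ℂ) (i : Fin n) :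
    oplusOne V i.succ 0 = 0 := by
  simp [oplusOne]

@[simp] lemma oplusOne_succsucc {n : ℕ} (V : Matrix (Fin n) (Fin n) ℂ) (i j : Fin n) :
    oplusOne V i.succ j.succ = V i j := by
  simp [oplusOne]

lemma oplusOne_mem {n : ℕ} (V : Matrix (Fin n) (Fin n) ℂ)
    (hV : V ∈ Matrix.unitaryGroup (Fin n) ℂ) :
    oplusOne V ∈ Matrix.unitaryGroup (Fin (n+1)) ℂ := by
  have hV' : star V * V = 1 := Matrix.mem_unitaryGroup_iff'.mp hV
  rw [Matrix.mem_unitaryGroup_iff']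
  ext i j
  refine Fin.cases ?_ ?_ i <;> [skip; intro i'] <;> refine Fin.cases ?_ ?_ j
  · simp [Matrix.mul_apply, Fin.sum_univ_succ, Matrix.star_apply, Matrix.one_apply]
  · intro j'
    simp [Matrix.mul_apply, Fin.sum_univ_succ, Matrix.star_apply, Matrix.one_apply,
      (Fin.succ_ne_zero j').symm]
  · simp [Matrix.mul_apply, Fin.sum_univ_succ, Matrix.star_apply, Matrix.one_apply,
      Fin.succ_ne_zero i']
  · intro j'
    have h1 : (star V * V) i' j' = (1 : Matrix (Fin n) (Fin n) ℂ) i' j' := by rw [hV']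
    rw [Matrix.mul_apply] at h1
    simp only [Matrix.star_apply] at h1
    simp only [Matrix.mul_apply, Fin.sum_univ_succ, Matrix.star_apply, oplusOne_succ0,
      oplusOne_succsucc, oplusOne_0succ, star_zero, zero_mul, zero_add]
    rw [h1]
    simp [Matrix.one_apply, Fin.succ_inj]

lemma oplusOne_conj_00 {n : ℕ} (V : Matrix (Fin n) (Fin n) ℂ)
    (B : Matrix (Fin (n+1)) (Fin (n+1)) ℂ) :
    (star (oplusOne V) * B * oplusOne V) 0 0 = B 0 0 := by
  simp [Matrix.mul_apply, Fin.sum_univ_succ, Matrix.star_apply]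

lemma oplusOne_conj_succ {n : ℕ} (V : Matrix (Fin n) (Fin n) ℂ)
    (B : Matrix (Fin (n+1)) (Fin (n+1)) ℂ) (i : Fin n) :
    (star (oplusOne V) * B * oplusOne V) i.succ i.succ
      = (star V * Matrix.of (fun (k l : Fin n) => B k.succ l.succ) * V) i i := by
  simp only [Matrix.mul_apply, Fin.sum_univ_succ, Matrix.star_apply, oplusOne_succ0,
    oplusOne_succsucc, oplusOne_0succ, star_zero, zero_mul, mul_zero, zero_add, add_zero,
    Matrix.of_apply, Finset.sum_mul, Finset.mul_sum, Finset.sum_const_zero]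
lemma hollow_aux : ∀ (d : ℕ) (A : Matrix (Fin d) (Fin d) ℂ), Matrix.trace A = 0 →
    ∃ U ∈ Matrix.unitaryGroup (Fin d) ℂ, ∀ i, (star U * A * U) i i = 0 := by
  intro d
  induction d with
  | zero =>
    intro A _
    exact ⟨1, one_mem _, fun i => i.elim0⟩
  | succ n ih =>
    intro A hA
    obtain ⟨U₁, hU₁mem, hU₁00⟩ := exists_unitary_zero00 A hA
    have hU₁ : star U₁ * U₁ = 1 := Matrix.mem_unitaryGroup_iff'.mp hU₁mem
    have hU₁' : U₁ * star U₁ = 1 := Matrix.mem_unitaryGroup_iff.mp hU₁mem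
    set B : Matrix (Fin (n+1)) (Fin (n+1)) ℂ := star U₁ * A * U₁ with hBdef
    have hBtr : B.trace = 0 := by
      rw [hBdef, Matrix.trace_mul_comm, ← mul_assoc, hU₁', one_mul, hA]
    set C : Matrix (Fin n) (Fin n) ℂ := Matrix.of (fun (k l : Fin n) => B k.succ l.succ)
      with hCdef
    have hCtr : C.trace = 0 := by
      have h1 : B.trace = B 0 0 + ∑ i : Fin n, B i.succ i.succ := by
        rw [Matrix.trace, Fin.sum_univ_succ]
        rfl
      have h2 : C.trace = ∑ i : Fin n, B i.succ i.succ := by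
        rw [Matrix.trace]
        rfl
      rw [h2]
      rw [hBtr, hU₁00, zero_add] at h1
      exact h1.symm
    obtain ⟨V, hVmem, hVdiag⟩ := ih C hCtr
    set D : Matrix (Fin (n+1)) (Fin (n+1)) ℂ := oplusOne V with hDdef
    have hDmem := oplusOne_mem V hVmem
    have hD : star D * D = 1 := Matrix.mem_unitaryGroup_iff'.mp hDmem
    refine ⟨U₁ * D, mul_mem hU₁mem hDmem, ?_⟩
    have hconj : star (U₁ * D) * A * (U₁ * D) = star D * B * D := by
      rw [StarMul.star_mul, hBdef]
      simp only [Matrix.mul_assoc]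
    rw [hconj]
    intro i
    refine Fin.cases ?_ ?_ i
    · rw [hDdef, oplusOne_conj_00]
      exact hU₁00
    · intro j
      rw [hDdef, oplusOne_conj_succ, ← hCdef]
      exact hVdiag j


/-- every trace-zero complex matrix is unitarily similar to a matrix with
zero diagonal. -/
theorem traceless_unitarily_hollow (d : ℕ) (A : Matrix (Fin d) (Fin d) ℂ)
    (hA : Matrix.trace A = 0) :
    ∃ U : Matrix (Fin d) (Fin d) ℂ, U ∈ Matrix.unitaryGroup (Fin d) ℂ ∧
      ∀ i, (U⁻¹ * A * U) i i = 0 := by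
  obtain ⟨U, hUmem, hUdiag⟩ := hollow_aux d A hA
  refine ⟨U, hUmem, ?_⟩
  have hinv : U⁻¹ = star U :=
    Matrix.inv_eq_left_inv (Matrix.mem_unitaryGroup_iff'.mp hUmem)
  rw [hinv]
  exact hUdiag
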